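/- Let k be an algebraically closed field, and let Λ be the path algebra of the quiver with vertices 0,1, arrows α_0, α_1: 1→0 and β: 0→1 modulo βα_iβ = 0 (i = 0,1). Define R(λ) for λ ∈ k as the Λ-module with underlying Kronecker representation (k, k; id, λ) and β acting as 0, and R(∞) = (k, k; 0, id) with β acting as 0. Then for λ ∈ k there is a nonsplit extension of R(λ) by R(∞) in mod Λ, given by letting β act nontrivially. -/

import Mathlib

/-- A finite-dimensional module over Λ = k⟨quiver with vertices 0,1, arrows
α₀, α₁ : 1 → 0, β : 0 → 1⟩/(βα₀β, βα₁β), viewed as a representation: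
spaces V0, V1, maps a0, a1 : V1 → V0 and b : V0 → V1 with b∘aᵢ∘b = 0. -/
structure LRep (k : Type) [Field k] where
  V0 : Type
  V1 : Type
  [acg0 : AddCommGroup V0]
  [acg1 : AddCommGroup V1]
  [mod0 : Module k V0]
  [mod1 : Module k V1]
  fd0 : FiniteDimensional k V0
  fd1 : FiniteDimensional k V1
  a0 : V1 →ₗ[k] V0
  a1 : V1 →ₗ[k] V0
  b : V0 →ₗ[k] V1
  rel0 : b ∘ₗ a0 ∘ₗ b = 0
  rel1 : b ∘ₗ a1 ∘ₗ b = 0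

attribute [instance] LRep.acg0 LRep.acg1 LRep.mod0 LRep.mod1

variable {k : Type} [Field k]

/-- A homomorphism of Λ-modules. -/
structure LHom (M N : LRep k) where
  f0 : M.V0 →ₗ[k] N.V0
  f1 : M.V1 →ₗ[k] N.V1
  comma0 : f0 ∘ₗ M.a0 = N.a0 ∘ₗ f1
  comma1 : f0 ∘ₗ M.a1 = N.a1 ∘ₗ f1
  commb : f1 ∘ₗ M.b = N.b ∘ₗ f0

/-- The Λ-modules R(λ), λ ∈ P¹(k) = k ∪ {∞} (`none` = ∞): the simple regular
Kronecker modules R(λ) = (k, k; id, λ·id) for λ ∈ k and R(∞) = (k, k; 0, id),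
with β acting as zero. -/
def LR : Option k → LRep k
  | some l =>
    { V0 := k, V1 := k, fd0 := inferInstance, fd1 := inferInstance
      a0 := LinearMap.id, a1 := l • LinearMap.id, b := 0
      rel0 := by simp, rel1 := by simp }
  | none =>
    { V0 := k, V1 := k, fd0 := inferInstance, fd1 := inferInstance
      a0 := 0, a1 := LinearMap.id, b := 0
      rel0 := by simp, rel1 := by simp }

/-- An extension 0 → B → E → A → 0 of Λ-modules. -/
structure LExt (A B : LRep k) where
  E : LRep k
  i : LHom B E
  p : LHom E A
  inj0 : Function.Injective i.f0
  inj1 : Function.Injective i.f1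
  surj0 : Function.Surjective p.f0
  surj1 : Function.Surjective p.f1
  exact0 : LinearMap.range i.f0 = LinearMap.ker p.f0
  exact1 : LinearMap.range i.f1 = LinearMap.ker p.f1

/-- An extension splits iff the inclusion admits a retraction. -/
def LExt.Splits {A B : LRep k} (X : LExt A B) : Prop :=
  ∃ r : LHom X.E B, (∀ x, r.f0 (X.i.f0 x) = x) ∧ (∀ x, r.f1 (X.i.f1 x) = x)

def myE (k : Type) [Field k] (l : k) : LRep k where
  V0 := k × k
  V1 := k × k
  fd0 := inferInstance
  fd1 := inferInstance
  a0 := LinearMap.prod 0 (LinearMap.snd k k k)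
  a1 := LinearMap.prod (LinearMap.fst k k k) (l • LinearMap.snd k k k)
  b := LinearMap.prod (LinearMap.snd k k k) 0
  rel0 := by ext ⟨x, y⟩ <;> simp
  rel1 := by ext ⟨x, y⟩ <;> simp

def myI (k : Type) [Field k] (l : k) : LHom (LR (none : Option k)) (myE k l) where
  f0 := LinearMap.inl k k k
  f1 := LinearMap.inl k k k
  comma0 := by ext x <;> rfl
  comma1 := by ext x; show ((1 : k), (0 : k)) = ((1 : k), l * 0); simp
  commb := by ext x <;> rfl

def myP (k : Type) [Field k] (l : k) : LHom (myE k l) (LR (some l)) where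
  f0 := LinearMap.snd k k k
  f1 := LinearMap.snd k k k
  comma0 := by ext ⟨x, y⟩ <;> rfl
  comma1 := by ext ⟨x, y⟩ <;> rfl
  commb := by ext ⟨x, y⟩ <;> rfl

def myX (k : Type) [Field k] (l : k) : LExt (LR (some l)) (LR (none : Option k)) where
  E := myE k l
  i := myI k l
  p := myP k l
  inj0 := fun a b h => by exact congrArg Prod.fst h
  inj1 := fun a b h => by exact congrArg Prod.fst h
  surj0 := fun y => ⟨(0, y), rfl⟩
  surj1 := fun y => ⟨(0, y), rfl⟩
  exact0 := by
    ext ⟨x, y⟩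
    simp only [LinearMap.mem_range, LinearMap.mem_ker, myI, myP, LinearMap.inl_apply,
      LinearMap.snd_apply]
    constructor
    · rintro ⟨a, ha⟩; rw [← ha]; rfl
    · intro h
      refine ⟨x, ?_⟩
      have h' : y = 0 := h
      rw [h']
      rfl
  exact1 := by
    ext ⟨x, y⟩
    simp only [LinearMap.mem_range, LinearMap.mem_ker, myI, myP, LinearMap.inl_apply,
      LinearMap.snd_apply]
    constructor
    · rintro ⟨a, ha⟩; rw [← ha]; rfl
    · intro h
      refine ⟨x, ?_⟩
      have h' : y = 0 := h
      rw [h']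
      rfl

/-- for every λ ∈ k there is a nonsplit extension of R(λ) by R(∞)
in mod Λ, obtained by letting β act nontrivially. -/
theorem stmt13 (k : Type) [Field k] [IsAlgClosed k] (l : k) :
    ∃ X : LExt (LR (some l)) (LR (none : Option k)), X.E.b ≠ 0 ∧ ¬ X.Splits := by
  refine ⟨myX k l, ?_, ?_⟩
  · intro h
    have hb : (myX k l).E.b ((0 : k), (1 : k)) = ((1 : k), (0 : k)) := rfl
    rw [h] at hb
    exact zero_ne_one (α := k) (congrArg Prod.fst hb)
  · rintro ⟨r, hr0, hr1⟩
    have h1 := hr1 ((1 : k) : (LR (none : Option k)).V1)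
    have h2 := congrFun (congrArg (fun f => f.toFun) r.commb) ((0 : k), (1 : k))
    simp [myX, myE, myI, LR] at h1 h2
    have h3 : r.f1 ((1 : k), (0 : k)) = 0 := h2
    exact one_ne_zero (α := k) (h1.symm.trans h3)
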